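/- Let 1 ≤ p ≤ r and let {u_n} ⊂ L^r(ℝ^N) be a bounded sequence such that u_n(x) → u_0(x) for a.e. x ∈ ℝ^N. Then ∫_{ℝ^N} | |u_n|^p − |u_n − u_0|^p − |u_0|^p |^{r/p} dx → 0 as n → ∞. -/

import Mathlib

/-!
STATEMENT 13 (Brezis–Lieb lemma). Let 1 ≤ p ≤ r and let {u_n} ⊂ L^r(ℝ^N) be a bounded
sequence such that u_n(x) → u_0(x) for a.e. x ∈ ℝ^N. Then
 ∫_{ℝ^N} | |u_n|^p − |u_n − u_0|^p − |u_0|^p |^{r/p} dx → 0  as n → ∞.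
-/

open MeasureTheory Real Filter Topology

noncomputable section

open scoped ENNReal NNReal

theorem bl_rpow_sub_le {p x y : ℝ} (hp : 1 ≤ p) (hy : 0 ≤ y) (hxy : y ≤ x) :
    x ^ p - y ^ p ≤ p * x ^ (p - 1) * (x - y) := by
  have hx : 0 ≤ x := hy.trans hxy
  rcases hx.eq_or_lt with h0 | hx0
  · have : y = 0 := le_antisymm (hxy.trans h0.ge) hy
    subst this
    simp [← h0, Real.zero_rpow (by linarith : p ≠ 0)]
  · have hs : -1 ≤ y / x - 1 := by
      have : 0 ≤ y / x := div_nonneg hy hx0.le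
      linarith
    have hber := one_add_mul_self_le_rpow_one_add hs hp
    have h1 : (1 + (y / x - 1)) ^ p = y ^ p / x ^ p := by
      rw [show 1 + (y / x - 1) = y / x by ring, Real.div_rpow hy hx0.le]
    rw [h1] at hber
    have hxp : 0 < x ^ p := Real.rpow_pos_of_pos hx0 p
    have h2 : (1 + p * (y / x - 1)) * x ^ p ≤ y ^ p := by
      calc (1 + p * (y / x - 1)) * x ^ p ≤ y ^ p / x ^ p * x ^ p :=
            mul_le_mul_of_nonneg_right hber hxp.le
        _ = y ^ p := div_mul_cancel₀ _ hxp.ne'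
    have h3 : x ^ p = x ^ (p - 1) * x := by
      rw [← Real.rpow_add_one hx0.ne' (p - 1)]; ring_nf
    have h4 : y / x * x = y := div_mul_cancel₀ _ hx0.ne'
    have h5 : y / x * x ^ p = y * x ^ (p - 1) := by
      rw [h3, show y / x * (x ^ (p - 1) * x) = y / x * x * x ^ (p - 1) by ring, h4]
    have h2' : x ^ p + p * (y * x ^ (p - 1)) - p * x ^ p ≤ y ^ p := by
      rw [show (1 + p * (y / x - 1)) * x ^ p
          = x ^ p + p * (y / x * x ^ p) - p * x ^ p by ring, h5] at h2
      linarith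
    have h3' : p * x ^ p = p * (x ^ (p - 1) * x) := by rw [← h3]
    linarith [h2', h3, h3']

theorem bl_abs_rpow_sub {p : ℝ} (hp : 1 ≤ p) (a b : ℝ) :
    |(|a + b| ^ p) - (|a| ^ p)| ≤ p * (|a| + |b|) ^ (p - 1) * |b| := by
  have hp1 : (0:ℝ) ≤ p - 1 := by linarith
  have key : ∀ s t : ℝ, 0 ≤ t → t ≤ s → s ≤ |a| + |b| → s - t ≤ |b| →
      s ^ p - t ^ p ≤ p * (|a| + |b|) ^ (p - 1) * |b| := by
    intro s t ht hts hs hst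
    calc s ^ p - t ^ p ≤ p * s ^ (p - 1) * (s - t) := bl_rpow_sub_le hp ht hts
      _ ≤ p * (|a| + |b|) ^ (p - 1) * |b| := by
          apply mul_le_mul
          · exact mul_le_mul_of_nonneg_left
              (Real.rpow_le_rpow (ht.trans hts) hs hp1) (by linarith)
          · exact hst
          · linarith
          · positivity
  have habs : abs (|a + b| - |a|) ≤ |b| := by
    have := abs_abs_sub_abs_le_abs_sub (a + b) a
    simpa using this
  rcases le_total (|a|) (|a + b|) with h | h
  · rw [abs_of_nonneg (by
      have := Real.rpow_le_rpow (abs_nonneg a) h (by linarith : (0:ℝ) ≤ p)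
      linarith)]
    exact key _ _ (abs_nonneg a) h (by simpa using abs_add_le a b)
      (by rw [abs_of_nonneg (by linarith)] at habs; linarith)
  · rw [abs_sub_comm, abs_of_nonneg (by
      have := Real.rpow_le_rpow (abs_nonneg (a+b)) h (by linarith : (0:ℝ) ≤ p)
      linarith)]
    exact key _ _ (abs_nonneg (a+b)) h
      (by have := abs_add_le a b; linarith [abs_nonneg b])
      (by rw [abs_sub_comm, abs_of_nonneg (by linarith)] at habs; linarith)

theorem bl_young {p ε x y : ℝ} (hp : 1 ≤ p) (hε : 0 < ε) (hx : 0 ≤ x) (hy : 0 ≤ y) :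
    x ^ (p - 1) * y ≤ ε * x ^ p + ε ^ (1 - p) * y ^ p := by
  have hp1 : (0:ℝ) ≤ p - 1 := by linarith
  have hεp : (0:ℝ) < ε ^ (1 - p) := Real.rpow_pos_of_pos hε _
  rcases le_or_gt y (ε * x) with h | h
  · rcases hx.eq_or_lt with h0 | hx0
    · have hy0 : y = 0 := le_antisymm (by rw [← h0] at h; simpa using h) hy
      have hps : (0:ℝ) < p := by linarith
      rw [hy0]
      simp [Real.zero_rpow hps.ne']
      positivity
    · calc x ^ (p - 1) * y ≤ x ^ (p - 1) * (ε * x) :=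
            mul_le_mul_of_nonneg_left h (by positivity)
        _ = ε * x ^ p := by
            rw [show x ^ (p-1) * (ε * x) = ε * (x ^ (p-1) * x) by ring,
              ← Real.rpow_add_one hx0.ne' (p-1)]; ring_nf
        _ ≤ ε * x ^ p + ε ^ (1 - p) * y ^ p := by
            have : (0:ℝ) ≤ ε ^ (1 - p) * y ^ p := by positivity
            linarith
  · have hy0 : 0 < y := lt_of_le_of_lt (by positivity) h
    have hxy : x ≤ y / ε := by rw [le_div_iff₀ hε]; nlinarith
    calc x ^ (p - 1) * y ≤ (y / ε) ^ (p - 1) * y :=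
          mul_le_mul_of_nonneg_right (Real.rpow_le_rpow hx hxy hp1) hy
      _ = ε ^ (1 - p) * y ^ p := by
          have hyp : y ^ (p - 1) * y = y ^ p := by
            rw [← Real.rpow_add_one hy0.ne' (p - 1)]; ring_nf
          rw [Real.div_rpow hy hε.le, div_mul_eq_mul_div, hyp,
            show (1 - p) = -(p - 1) by ring, Real.rpow_neg hε.le]
          ring
      _ ≤ ε * x ^ p + ε ^ (1 - p) * y ^ p := by
          have : (0:ℝ) ≤ ε * x ^ p := by positivity
          linarith

theorem bl_add_rpow {s x y : ℝ} (hs : 0 ≤ s) (hx : 0 ≤ x) (hy : 0 ≤ y) :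
    (x + y) ^ s ≤ 2 ^ s * (x ^ s + y ^ s) := by
  have h1 : x + y ≤ 2 * max x y := by
    rcases le_total x y with h | h
    · simp [max_eq_right h]; linarith
    · simp [max_eq_left h]; linarith
  have hm : 0 ≤ max x y := le_max_of_le_left hx
  calc (x + y) ^ s ≤ (2 * max x y) ^ s := Real.rpow_le_rpow (by linarith) h1 hs
    _ = 2 ^ s * (max x y) ^ s := Real.mul_rpow (by norm_num) hm
    _ ≤ 2 ^ s * (x ^ s + y ^ s) := by
        apply mul_le_mul_of_nonneg_left _ (by positivity)
        rcases le_total x y with h | h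
        · rw [max_eq_right h]; nlinarith [Real.rpow_nonneg hx s]
        · rw [max_eq_left h]; nlinarith [Real.rpow_nonneg hy s]

theorem bl_key {p r ε : ℝ} (hp : 1 ≤ p) (hpr : p ≤ r) (hε : 0 < ε) :
    ∃ C : ℝ, 0 < C ∧ ∀ a b : ℝ,
      |(|a + b| ^ p) - (|a| ^ p) - (|b| ^ p)| ^ (r / p) ≤ ε * |a| ^ r + C * |b| ^ r := by
  have hp0 : (0:ℝ) < p := by linarith
  have hq1 : 1 ≤ r / p := (one_le_div hp0).2 hpr
  set q := r / p with hq
  have hq0 : (0:ℝ) < q := by linarith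
  have hpq : p * q = r := by rw [hq]; field_simp
  set K : ℝ := p * 2 ^ (p - 1) with hK
  have hKpos : 0 < K := by positivity
  set δ : ℝ := (ε * 2 ^ (-q)) ^ q⁻¹ / K with hδdef
  have hδ : 0 < δ := by positivity
  have hBpos : 0 < K * δ ^ (1 - p) + K + 1 := by positivity
  refine ⟨2 ^ q * (K * δ ^ (1 - p) + K + 1) ^ q, by positivity, fun a b => ?_⟩
  have step1 : |(|a + b| ^ p) - (|a| ^ p) - (|b| ^ p)|
      ≤ K * δ * |a| ^ p + (K * δ ^ (1 - p) + K + 1) * |b| ^ p := by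
    have h1 : |(|a + b| ^ p) - (|a| ^ p) - (|b| ^ p)|
        ≤ |(|a + b| ^ p) - (|a| ^ p)| + |b| ^ p := by
      calc |(|a + b| ^ p) - (|a| ^ p) - (|b| ^ p)|
          ≤ |(|a + b| ^ p) - (|a| ^ p)| + |(|b| ^ p)| := abs_sub _ _
        _ = |(|a + b| ^ p) - (|a| ^ p)| + |b| ^ p := by
            rw [abs_of_nonneg (Real.rpow_nonneg (abs_nonneg b) p)]
    have h2 := bl_abs_rpow_sub hp a b
    have h3 : (|a| + |b|) ^ (p - 1) ≤ 2 ^ (p - 1) * (|a| ^ (p - 1) + |b| ^ (p - 1)) :=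
      bl_add_rpow (by linarith) (abs_nonneg a) (abs_nonneg b)
    have h4 : |a| ^ (p - 1) * |b| ≤ δ * |a| ^ p + δ ^ (1 - p) * |b| ^ p :=
      bl_young hp hδ (abs_nonneg a) (abs_nonneg b)
    have h5 : |b| ^ (p - 1) * |b| ≤ |b| ^ p := by
      rcases (abs_nonneg b).eq_or_lt with h0 | hb0
      · simp [← h0, Real.zero_rpow hp0.ne']
      · exact le_of_eq (by rw [← Real.rpow_add_one hb0.ne' (p - 1)]; ring_nf)
    have h6 : p * (|a| + |b|) ^ (p - 1) * |b|
        ≤ K * (|a| ^ (p - 1) * |b|) + K * (|b| ^ (p - 1) * |b|) := by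
      calc p * (|a| + |b|) ^ (p - 1) * |b|
          ≤ p * (2 ^ (p - 1) * (|a| ^ (p - 1) + |b| ^ (p - 1))) * |b| :=
            mul_le_mul_of_nonneg_right (mul_le_mul_of_nonneg_left h3 hp0.le) (abs_nonneg b)
        _ = K * (|a| ^ (p - 1) * |b|) + K * (|b| ^ (p - 1) * |b|) := by rw [hK]; ring
    have h4' := mul_le_mul_of_nonneg_left h4 hKpos.le
    have h5' := mul_le_mul_of_nonneg_left h5 hKpos.le
    linarith
  have habs : (0:ℝ) ≤ |(|a + b| ^ p) - (|a| ^ p) - (|b| ^ p)| := abs_nonneg _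
  have step2 : |(|a + b| ^ p) - (|a| ^ p) - (|b| ^ p)| ^ q
      ≤ (K * δ * |a| ^ p + (K * δ ^ (1 - p) + K + 1) * |b| ^ p) ^ q :=
    Real.rpow_le_rpow habs step1 hq0.le
  have step3 : (K * δ * |a| ^ p + (K * δ ^ (1 - p) + K + 1) * |b| ^ p) ^ q
      ≤ 2 ^ q * ((K * δ * |a| ^ p) ^ q + ((K * δ ^ (1 - p) + K + 1) * |b| ^ p) ^ q) :=
    bl_add_rpow hq0.le (by positivity) (by positivity)
  have hap : (|a| ^ p) ^ q = |a| ^ r := by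
    rw [← Real.rpow_mul (abs_nonneg a), hpq]
  have hbp : (|b| ^ p) ^ q = |b| ^ r := by
    rw [← Real.rpow_mul (abs_nonneg b), hpq]
  have hKδq : 2 ^ q * (K * δ) ^ q = ε := by
    have h7 : K * δ = (ε * 2 ^ (-q)) ^ q⁻¹ := by
      rw [hδdef, mul_div_cancel₀ _ hKpos.ne']
    rw [h7, Real.rpow_inv_rpow (by positivity) hq0.ne',
      Real.rpow_neg (by norm_num : (0:ℝ) ≤ 2)]
    have h8 : (2:ℝ) ^ q ≠ 0 := (Real.rpow_pos_of_pos (by norm_num) q).ne'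
    field_simp
  have hsplit1 : (K * δ * |a| ^ p) ^ q = (K * δ) ^ q * |a| ^ r := by
    rw [Real.mul_rpow (by positivity) (Real.rpow_nonneg (abs_nonneg a) p), hap]
  have hsplit2 : ((K * δ ^ (1 - p) + K + 1) * |b| ^ p) ^ q
      = (K * δ ^ (1 - p) + K + 1) ^ q * |b| ^ r := by
    rw [Real.mul_rpow hBpos.le (Real.rpow_nonneg (abs_nonneg b) p), hbp]
  calc |(|a + b| ^ p) - (|a| ^ p) - (|b| ^ p)| ^ q
      ≤ 2 ^ q * ((K * δ * |a| ^ p) ^ q + ((K * δ ^ (1 - p) + K + 1) * |b| ^ p) ^ q) :=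
        step2.trans step3
    _ = 2 ^ q * (K * δ) ^ q * |a| ^ r
        + 2 ^ q * (K * δ ^ (1 - p) + K + 1) ^ q * |b| ^ r := by
        rw [hsplit1, hsplit2]; ring
    _ = ε * |a| ^ r + 2 ^ q * (K * δ ^ (1 - p) + K + 1) ^ q * |b| ^ r := by
        rw [hKδq]

open MeasureTheory in
theorem bl_integral_rpow_le {α : Type*} [MeasurableSpace α] {μ : Measure α} {r : ℝ}
    (hr : 1 ≤ r) {f : α → ℝ} (hf : MemLp f (ENNReal.ofReal r) μ) {K : ℝ≥0∞} (hK : K ≠ ⊤)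
    (h : eLpNorm f (ENNReal.ofReal r) μ ≤ K) :
    ∫ x, |f x| ^ r ∂μ ≤ K.toReal ^ r := by
  have hr0 : (0:ℝ) < r := by linarith
  have hre0 : ENNReal.ofReal r ≠ 0 := (ENNReal.ofReal_pos.2 hr0).ne'
  have hretop : ENNReal.ofReal r ≠ ⊤ := ENNReal.ofReal_ne_top
  have htr : (ENNReal.ofReal r).toReal = r := ENNReal.toReal_ofReal hr0.le
  have hmeas : AEStronglyMeasurable (fun x => |f x| ^ r) μ :=
    ((Real.continuous_rpow_const hr0.le).comp continuous_abs).comp_aestronglyMeasurable hf.1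
  have hint : ∫ x, |f x| ^ r ∂μ
      = (∫⁻ x, (‖f x‖₊ : ℝ≥0∞) ^ r ∂μ).toReal := by
    rw [integral_eq_lintegral_of_nonneg_ae
      (Filter.Eventually.of_forall fun x => Real.rpow_nonneg (abs_nonneg _) r) hmeas]
    congr 1
    apply lintegral_congr fun x => ?_
    rw [← enorm_eq_nnnorm, Real.enorm_eq_ofReal_abs, ← ENNReal.ofReal_rpow_of_nonneg (abs_nonneg _) hr0.le]
  have hlin : ∫⁻ x, (‖f x‖₊ : ℝ≥0∞) ^ r ∂μ ≤ K ^ r := by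
    have h1 := eLpNorm_eq_lintegral_rpow_enorm_toReal hre0 hretop (f := f) (μ := μ)
    rw [htr] at h1
    simp only [enorm_eq_nnnorm] at h1
    have h2 : ((∫⁻ x, (‖f x‖₊ : ℝ≥0∞) ^ r ∂μ) ^ (1 / r)) ^ r ≤ K ^ r := by
      rw [← h1]; exact ENNReal.rpow_le_rpow h hr0.le
    rwa [one_div, ENNReal.rpow_inv_rpow hr0.ne'] at h2
  rw [hint, ENNReal.toReal_rpow]
  exact ENNReal.toReal_mono (by simp [ENNReal.rpow_lt_top_of_nonneg hr0.le hK, lt_top_iff_ne_top.1]) hlin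

theorem brezis_lieb (N : ℕ) (p r : ℝ) (hp : 1 ≤ p) (hpr : p ≤ r)
    (u : ℕ → (Fin N → ℝ) → ℝ) (u₀ : (Fin N → ℝ) → ℝ)
    (hmem : ∀ n, MemLp (u n) (ENNReal.ofReal r) volume)
    (hbdd : ∃ C : ℝ, ∀ n, eLpNorm (u n) (ENNReal.ofReal r) volume ≤ ENNReal.ofReal C)
    (hae : ∀ᵐ x ∂(volume : Measure (Fin N → ℝ)),
      Tendsto (fun n => u n x) atTop (𝓝 (u₀ x))) :
    Tendsto (fun n => ∫ x : Fin N → ℝ,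
        (|(|u n x| ^ p) - (|u n x - u₀ x| ^ p) - (|u₀ x| ^ p)|) ^ (r / p))
      atTop (𝓝 0) := by
  obtain ⟨C, hC⟩ := hbdd
  have hr1 : 1 ≤ r := hp.trans hpr
  have hr0 : (0:ℝ) < r := by linarith
  have hp0 : (0:ℝ) < p := by linarith
  have hq0 : (0:ℝ) < r / p := by positivity
  have hre0 : ENNReal.ofReal r ≠ 0 := (ENNReal.ofReal_pos.2 hr0).ne'
  have hretop : ENNReal.ofReal r ≠ ⊤ := ENNReal.ofReal_ne_top
  have htr : (ENNReal.ofReal r).toReal = r := ENNReal.toReal_ofReal hr0.le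
  have hre1 : 1 ≤ ENNReal.ofReal r := by
    rw [← ENNReal.ofReal_one]; exact ENNReal.ofReal_le_ofReal hr1
  -- u₀ is measurable and in L^r
  have hu0m : AEStronglyMeasurable u₀ volume :=
    aestronglyMeasurable_of_tendsto_ae atTop (fun n => (hmem n).1) hae
  have hu0norm : eLpNorm u₀ (ENNReal.ofReal r) volume ≤ ENNReal.ofReal C :=
    le_trans (Lp.eLpNorm_lim_le_liminf_eLpNorm (fun n => (hmem n).1) u₀ hae)
      (liminf_le_of_frequently_le' (Frequently.of_forall hC))
  have hu0mem : MemLp u₀ (ENNReal.ofReal r) volume :=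
    ⟨hu0m, lt_of_le_of_lt hu0norm ENNReal.ofReal_lt_top⟩
  -- the difference sequence
  set v : ℕ → (Fin N → ℝ) → ℝ := fun n x => u n x - u₀ x with hv
  have hvmem : ∀ n, MemLp (v n) (ENNReal.ofReal r) volume := fun n => (hmem n).sub hu0mem
  have hvm : ∀ n, AEStronglyMeasurable (v n) volume := fun n => (hvmem n).1
  have hvnorm : ∀ n, eLpNorm (v n) (ENNReal.ofReal r) volume
      ≤ ENNReal.ofReal C + ENNReal.ofReal C := fun n =>
    le_trans (eLpNorm_sub_le (hmem n).1 hu0m hre1) (add_le_add (hC n) hu0norm)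
  set M : ℝ := (ENNReal.ofReal C + ENNReal.ofReal C).toReal ^ r with hM
  have hM0 : 0 ≤ M := by
    rw [hM]; exact Real.rpow_nonneg ENNReal.toReal_nonneg r
  have hvint : ∀ n, Integrable (fun x => |v n x| ^ r) volume := fun n => by
    have := (hvmem n).integrable_norm_rpow hre0 hretop
    simpa [htr, Real.norm_eq_abs] using this
  have hvintle : ∀ n, ∫ x, |v n x| ^ r ≤ M := fun n =>
    bl_integral_rpow_le hr1 (hvmem n)
      (by simp [ENNReal.add_ne_top]) (hvnorm n)
  have hu0int : Integrable (fun x => |u₀ x| ^ r) volume := by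
    have := hu0mem.integrable_norm_rpow hre0 hretop
    simpa [htr, Real.norm_eq_abs] using this
  -- continuity helper
  have contp : ∀ s : ℝ, 0 < s → Continuous (fun t : ℝ => |t| ^ s) := fun s hs =>
    (Real.continuous_rpow_const hs.le).comp continuous_abs
  -- the sequence of integrands
  set f : ℕ → (Fin N → ℝ) → ℝ := fun n x =>
    (|(|u n x| ^ p) - (|u n x - u₀ x| ^ p) - (|u₀ x| ^ p)|) ^ (r / p) with hfdef
  have hf0 : ∀ n x, 0 ≤ f n x := fun n x => Real.rpow_nonneg (abs_nonneg _) _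
  have hfm : ∀ n, AEStronglyMeasurable (f n) volume := fun n => by
    apply (Real.continuous_rpow_const hq0.le).comp_aestronglyMeasurable
    apply Continuous.comp_aestronglyMeasurable continuous_abs
    exact (((contp p hp0).comp_aestronglyMeasurable (hmem n).1).sub
      ((contp p hp0).comp_aestronglyMeasurable ((hmem n).1.sub hu0m))).sub
      ((contp p hp0).comp_aestronglyMeasurable hu0m)
  -- pointwise convergence to 0
  have hvtend : ∀ᵐ x ∂(volume : Measure (Fin N → ℝ)),
      Tendsto (fun n => |v n x| ^ r) atTop (𝓝 0) := by
    filter_upwards [hae] with x hx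
    have h1 : Tendsto (fun n => v n x) atTop (𝓝 0) := by
      have := hx.sub (tendsto_const_nhds (x := u₀ x))
      simpa using this
    have h2 := ((contp r hr0).tendsto 0).comp h1
    simpa [Function.comp_def, Real.zero_rpow hr0.ne'] using h2
  have hftend : ∀ᵐ x ∂(volume : Measure (Fin N → ℝ)),
      Tendsto (fun n => f n x) atTop (𝓝 0) := by
    filter_upwards [hae] with x hx
    have h1 : Tendsto (fun n => |u n x| ^ p) atTop (𝓝 (|u₀ x| ^ p)) :=
      ((contp p hp0).tendsto _).comp hx
    have h1' : Tendsto (fun n => u n x - u₀ x) atTop (𝓝 0) := by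
      have := hx.sub (tendsto_const_nhds (x := u₀ x))
      simpa using this
    have h2 : Tendsto (fun n => |u n x - u₀ x| ^ p) atTop (𝓝 0) := by
      have := ((contp p hp0).tendsto 0).comp h1'
      simpa [Function.comp_def, Real.zero_rpow hp0.ne'] using this
    have h3 : Tendsto (fun n => (|u n x| ^ p) - (|u n x - u₀ x| ^ p) - (|u₀ x| ^ p))
        atTop (𝓝 0) := by
      have := (h1.sub h2).sub (tendsto_const_nhds (x := |u₀ x| ^ p))
      simpa using this
    have h4 := ((contp (r / p) hq0).tendsto 0).comp h3
    simpa [Function.comp_def, Real.zero_rpow hq0.ne'] using h4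
  -- main ε-argument
  rw [Metric.tendsto_atTop]
  intro ε hε
  set ε' : ℝ := ε / (2 * (M + 1)) with hε'def
  have hε'0 : 0 < ε' := by rw [hε'def]; positivity
  obtain ⟨Cε, hCε0, hkey⟩ := bl_key hp hpr hε'0
  have hptwise : ∀ n x, f n x ≤ ε' * |v n x| ^ r + Cε * |u₀ x| ^ r := by
    intro n x
    have h := hkey (u n x - u₀ x) (u₀ x)
    rw [sub_add_cancel] at h
    exact h
  have hfint : ∀ n, Integrable (f n) volume := fun n =>
    Integrable.mono' (((hvint n).const_mul ε').add (hu0int.const_mul Cε)) (hfm n)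
      (Filter.Eventually.of_forall fun x => by
        rw [Real.norm_eq_abs, abs_of_nonneg (hf0 n x)]; exact hptwise n x)
  set g : ℕ → (Fin N → ℝ) → ℝ := fun n x => max (f n x - ε' * |v n x| ^ r) 0 with hgdef
  have hg0 : ∀ n x, 0 ≤ g n x := fun n x => le_max_right _ _
  have hgle : ∀ n x, g n x ≤ Cε * |u₀ x| ^ r := fun n x =>
    max_le (by have := hptwise n x; linarith)
      (by positivity)
  have hgm : ∀ n, AEStronglyMeasurable (g n) volume := fun n =>
    (continuous_id.max continuous_const).comp_aestronglyMeasurable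
      ((hfm n).sub (((contp r hr0).comp_aestronglyMeasurable (hvm n)).const_mul ε'))
  have hgint : ∀ n, Integrable (g n) volume := fun n =>
    (hu0int.const_mul Cε).mono' (hgm n)
      (Filter.Eventually.of_forall fun x => by
        rw [Real.norm_eq_abs, abs_of_nonneg (hg0 n x)]; exact hgle n x)
  have hgtend : Tendsto (fun n => ∫ x, g n x) atTop (𝓝 0) := by
    have hlim : ∀ᵐ x ∂(volume : Measure (Fin N → ℝ)),
        Tendsto (fun n => g n x) atTop (𝓝 0) := by
      filter_upwards [hftend, hvtend] with x hfx hvx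
      have h1 : Tendsto (fun n => f n x - ε' * |v n x| ^ r) atTop (𝓝 0) := by
        have := hfx.sub ((hvx.const_mul ε'))
        simpa using this
      have := h1.max (tendsto_const_nhds (x := (0:ℝ)))
      simpa using this
    have h := tendsto_integral_of_dominated_convergence (fun x => Cε * |u₀ x| ^ r)
      hgm (hu0int.const_mul Cε)
      (fun n => Filter.Eventually.of_forall fun x => by
        rw [Real.norm_eq_abs, abs_of_nonneg (hg0 n x)]; exact hgle n x)
      hlim
    simpa using h
  have hfle : ∀ n, ∫ x, f n x ≤ (∫ x, g n x) + ε' * M := by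
    intro n
    have h1 : ∫ x, f n x ≤ ∫ x, (g n x + ε' * |v n x| ^ r) := by
      apply integral_mono (hfint n) ((hgint n).add ((hvint n).const_mul ε'))
      intro x
      have h2 : f n x - ε' * |v n x| ^ r ≤ g n x := le_max_left _ _
      simp only [Pi.add_apply]
      linarith
    rw [integral_add (hgint n) ((hvint n).const_mul ε'),
      integral_const_mul] at h1
    have h3 : ε' * ∫ x, |v n x| ^ r ≤ ε' * M :=
      mul_le_mul_of_nonneg_left (hvintle n) hε'0.le
    linarith
  have hε'M : ε' * M ≤ ε / 2 := by
    rw [hε'def]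
    rw [div_mul_eq_mul_div, div_le_div_iff₀ (by positivity) (by norm_num)]
    nlinarith
  obtain ⟨Nb, hNb⟩ := (Metric.tendsto_atTop.1 hgtend) (ε / 2) (by linarith)
  refine ⟨Nb, fun n hn => ?_⟩
  have hgn := hNb n hn
  rw [Real.dist_eq, sub_zero] at hgn
  have hfnn : 0 ≤ ∫ x, f n x := integral_nonneg (fun x => hf0 n x)
  have hgabs : ∫ x, g n x < ε / 2 := lt_of_le_of_lt (le_abs_self _) hgn
  have hcalc : ∫ x, f n x < ε := by
    have := hfle n
    linarith
  show dist (∫ x, f n x) 0 < ε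
  rw [Real.dist_eq, sub_zero, abs_of_nonneg hfnn]
  exact hcalc
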